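/- Let n ≥ 3 and let u ∈ ℝ^n have all entries strictly positive. Then the matrix U(u) is nonsingular: the only vector a ∈ ℝ^n with U(u)·a = 0 is a = 0. -/

import Mathlib

open Finset

/-- The matrix `U(u)` with diagonal entries `∑_{k≠i} u_k` and off-diagonal entries
`U(u)_{ij} = u_j`. -/
def Umat (n : ℕ) (u : Fin n → ℝ) : Matrix (Fin n) (Fin n) ℝ :=
  Matrix.of fun i j => if i = j then ∑ k ∈ Finset.univ.erase i, u k else u j

/-- For `u` with strictly positive entries and `n ≥ 3`, the matrix `U(u)` is nonsingular. -/
theorem Umat_nonsingular (n : ℕ) (hn : 3 ≤ n) (u : Fin n → ℝ) (hu : ∀ i, 0 < u i)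
    (a : Fin n → ℝ) (ha : (Umat n u).mulVec a = 0) : a = 0 := by
  have hn0 : 0 < n := by omega
  set S : ℝ := ∑ k, u k with hS
  set s : ℝ := ∑ k, u k * a k with hs
  have hSpos : 0 < S := Finset.sum_pos (fun i _ => hu i) ⟨⟨0, hn0⟩, mem_univ _⟩
  -- the key row equations
  have key : ∀ i, (S - 2 * u i) * a i + s = 0 := by
    intro i
    have h0 := congrFun ha i
    simp only [Matrix.mulVec, dotProduct, Umat, Matrix.of_apply, Pi.zero_apply] at h0
    have e1 : (∑ j, (if i = j then (∑ k ∈ univ.erase i, u k) else u j) * a j)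
        = (∑ k ∈ univ.erase i, u k) * a i + ∑ j ∈ univ.erase i, u j * a j := by
      rw [← Finset.add_sum_erase univ _ (mem_univ i)]
      simp only [if_pos rfl]
      congr 1
      apply Finset.sum_congr rfl
      intro j hj
      rw [if_neg (Ne.symm (Finset.ne_of_mem_erase hj))]
    rw [e1] at h0
    rw [Finset.sum_erase_eq_sub (f := u) (mem_univ i),
        Finset.sum_erase_eq_sub (f := fun j => u j * a j) (mem_univ i)] at h0
    rw [← hS, ← hs] at h0
    linarith [h0]
  set d : Fin n → ℝ := fun i => S - 2 * u i with hd
  have hdS : ∀ i, d i < S := by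
    intro i
    have := hu i
    simp only [hd]
    linarith
  -- at most one index with d i = 0
  have huniq : ∀ i j : Fin n, i ≠ j → d i = 0 → d j = 0 → False := by
    intro i j hij hdi hdj
    have hji : j ∈ univ.erase i := mem_erase.mpr ⟨hij.symm, mem_univ j⟩
    have hsum : S = u i + (u j + ∑ k ∈ (univ.erase i).erase j, u k) := by
      rw [hS, ← Finset.add_sum_erase univ u (mem_univ i),
        ← Finset.add_sum_erase _ u hji]
    have hne : ((univ.erase i).erase j).Nonempty := by
      rw [← Finset.card_pos, Finset.card_erase_of_mem hji, Finset.card_erase_of_mem (mem_univ i),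
        Finset.card_univ, Fintype.card_fin]
      omega
    have hpos : 0 < ∑ k ∈ (univ.erase i).erase j, u k :=
      Finset.sum_pos (fun k _ => hu k) hne
    simp only [hd] at hdi hdj
    linarith
  by_cases hs0 : s = 0
  · -- easy case
    funext i
    show a i = 0
    by_cases hdi : d i = 0
    · have hj : ∀ j, j ≠ i → a j = 0 := by
        intro j hji
        have hdj : d j ≠ 0 := fun h => huniq i j (fun e => hji (e.symm)) hdi h
        have := key j
        rw [hs0] at this
        have : d j * a j = 0 := by simp only [hd]; linarith
        exact (mul_eq_zero.mp this).resolve_left hdj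
      have : s = u i * a i := by
        rw [hs, ← Finset.add_sum_erase univ _ (mem_univ i)]
        have : ∑ j ∈ univ.erase i, u j * a j = 0 := by
          apply Finset.sum_eq_zero
          intro j hjm
          rw [hj j (Finset.ne_of_mem_erase hjm), mul_zero]
        rw [this, add_zero]
      rw [hs0] at this
      have := (hu i).ne'
      field_simp at *
      exact (mul_eq_zero.mp this.symm).resolve_right ‹u i ≠ 0›
    · have := key i
      rw [hs0, add_zero] at this
      have hdi' : (S - 2 * u i) ≠ 0 := hdi
      exact (mul_eq_zero.mp this).resolve_left hdi'
  · -- hard case: s ≠ 0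
    exfalso
    have hdne : ∀ i, d i ≠ 0 := by
      intro i h
      have hk := key i
      simp only [hd] at h
      rw [h, zero_mul, zero_add] at hk
      exact hs0 hk
    -- a i = -s / d i
    have han : ∀ i, a i = -s / d i := by
      intro i
      have hk := key i
      have : d i * a i = -s := by simp only [hd]; linarith
      field_simp [hdne i] at this ⊢
      linarith
    -- ∑ u i / d i = -1
    have hud : ∑ i, u i / d i = -1 := by
      have h1 : s = ∑ i, u i * (-s / d i) := by
        rw [hs]
        exact Finset.sum_congr rfl fun i _ => by rw [← han i]
      have h2 : ∑ i, u i * (-s / d i) = -s * ∑ i, u i / d i := by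
        rw [Finset.mul_sum]
        exact Finset.sum_congr rfl fun i _ => by ring
      rw [h2] at h1
      have h3 : -s * (∑ i, u i / d i) = -s * (-1) := by rw [← h1]; ring
      exact mul_left_cancel₀ (neg_ne_zero.mpr hs0) h3
    -- ∑ 1 / d i = (n - 2) / S
    have hinv : ∑ i, 1 / d i = ((n : ℝ) - 2) / S := by
      have hterm : ∀ i, u i / d i = S / 2 * (1 / d i) - 1 / 2 := by
        intro i
        have h := hdne i
        have hui : u i = (S - d i) / 2 := by simp only [hd]; ring
        rw [hui]
        field_simp
      have h1 : ∑ i, u i / d i = S / 2 * (∑ i, 1 / d i) - (n : ℝ) / 2 := by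
        rw [Finset.mul_sum]
        calc ∑ i, u i / d i = ∑ i : Fin n, (S / 2 * (1 / d i) - 1 / 2) :=
              Finset.sum_congr rfl fun i _ => hterm i
          _ = (∑ i : Fin n, S / 2 * (1 / d i)) - (n : ℝ) / 2 := by
              rw [Finset.sum_sub_distrib, Finset.sum_const, Finset.card_univ, Fintype.card_fin,
                nsmul_eq_mul]
              ring
      rw [hud] at h1
      field_simp at h1 ⊢
      linarith
    have hdsum : ∑ i, d i = ((n : ℝ) - 2) * S := by
      simp only [hd]
      rw [Finset.sum_sub_distrib, Finset.sum_const, Finset.card_univ, Fintype.card_fin,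
        nsmul_eq_mul, ← Finset.mul_sum, ← hS]
      ring
    by_cases hall : ∀ i, 0 < d i
    · -- all d positive: each 1/d i > 1/S
      have hlt : ∀ i : Fin n, (1 : ℝ) / S < 1 / d i := by
        intro i
        exact one_div_lt_one_div_of_lt (hall i) (hdS i)
      have h1 : ∑ _i : Fin n, (1 : ℝ) / S < ∑ i, 1 / d i :=
        Finset.sum_lt_sum_of_nonempty ⟨⟨0, hn0⟩, mem_univ _⟩ fun i _ => hlt i
      rw [Finset.sum_const, Finset.card_univ, Fintype.card_fin, nsmul_eq_mul, hinv] at h1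
      have hn' : (3 : ℝ) ≤ (n : ℝ) := by exact_mod_cast hn
      rw [mul_one_div, div_lt_div_iff₀ hSpos hSpos] at h1
      nlinarith
    · push_neg at hall
      obtain ⟨i₀, hi₀⟩ := hall
      have hdi₀ : d i₀ < 0 := lt_of_le_of_ne hi₀ (hdne i₀)
      set t : ℝ := -d i₀ with htdef
      have htpos : 0 < t := by simp only [htdef]; linarith
      have htS : t < S := by
        have : S - u i₀ = ∑ k ∈ univ.erase i₀, u k := by
          rw [hS, Finset.sum_erase_eq_sub (mem_univ i₀)]
        have hne : (univ.erase i₀).Nonempty := by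
          rw [← Finset.card_pos, Finset.card_erase_of_mem (mem_univ i₀),
            Finset.card_univ, Fintype.card_fin]
          omega
        have hpos : 0 < ∑ k ∈ univ.erase i₀, u k := Finset.sum_pos (fun k _ => hu k) hne
        have hui₀ : u i₀ < S := by linarith
        simp only [htdef, hd]
        linarith
      -- for j ≠ i₀, t < d j
      have hlow : ∀ j ∈ univ.erase i₀, t < d j := by
        intro j hj
        have hji₀ : j ≠ i₀ := Finset.ne_of_mem_erase hj
        have hsplit : ∑ i, d i = d i₀ + (d j + ∑ k ∈ (univ.erase i₀).erase j, d k) := by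
          rw [← Finset.add_sum_erase univ d (mem_univ i₀), ← Finset.add_sum_erase _ d hj]
        have hcard : ((univ.erase i₀).erase j).card = n - 2 := by
          rw [Finset.card_erase_of_mem hj, Finset.card_erase_of_mem (mem_univ i₀),
            Finset.card_univ, Fintype.card_fin]
          omega
        have hrest : ∑ k ∈ (univ.erase i₀).erase j, d k < ((n : ℝ) - 2) * S := by
          have hne : ((univ.erase i₀).erase j).Nonempty := by
            rw [← Finset.card_pos, hcard]; omega
          have := Finset.sum_lt_sum_of_nonempty hne (f := d) (g := fun _ => S)
            (fun k _ => hdS k)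
          rw [Finset.sum_const, hcard, nsmul_eq_mul] at this
          have hc : ((n - 2 : ℕ) : ℝ) = (n : ℝ) - 2 := by
            push_cast [Nat.cast_sub (by omega : 2 ≤ n)]; ring
          rw [hc] at this
          exact this
        rw [hdsum] at hsplit
        simp only [htdef]
        linarith
      -- secant bound
      have hsec : ∀ j ∈ univ.erase i₀, 1 / d j < (t + S - d j) / (S * t) := by
        intro j hj
        have h1 : t < d j := hlow j hj
        have h2 : d j < S := hdS j
        have hdj : 0 < d j := lt_trans htpos h1
        rw [div_lt_div_iff₀ hdj (by positivity)]
        nlinarith [mul_pos (sub_pos.mpr h1) (sub_pos.mpr h2)]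
      have hcard' : (univ.erase i₀).card = n - 1 := by
        rw [Finset.card_erase_of_mem (mem_univ i₀), Finset.card_univ, Fintype.card_fin]
      have hne' : (univ.erase i₀).Nonempty := by rw [← Finset.card_pos, hcard']; omega
      have hsum1 : ∑ j ∈ univ.erase i₀, 1 / d j < ∑ j ∈ univ.erase i₀, (t + S - d j) / (S * t) :=
        Finset.sum_lt_sum_of_nonempty hne' hsec
      -- compute RHS
      have hdsum' : ∑ j ∈ univ.erase i₀, d j = ((n : ℝ) - 2) * S + t := by
        rw [Finset.sum_erase_eq_sub (mem_univ i₀), hdsum]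
        simp only [htdef]; ring
      have hrhs : ∑ j ∈ univ.erase i₀, (t + S - d j) / (S * t)
          = (((n : ℝ) - 2) * t + S) / (S * t) := by
        rw [← Finset.sum_div, Finset.sum_sub_distrib, Finset.sum_const, hcard', nsmul_eq_mul,
          hdsum']
        have hc : ((n - 1 : ℕ) : ℝ) = (n : ℝ) - 1 := by
          push_cast [Nat.cast_sub (by omega : 1 ≤ n)]; ring
        rw [hc]
        ring_nf
      -- compute LHS
      have hlhs : ∑ j ∈ univ.erase i₀, 1 / d j = ((n : ℝ) - 2) / S + 1 / t := by
        rw [Finset.sum_erase_eq_sub (f := fun j => 1 / d j) (mem_univ i₀), hinv]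
        simp only [htdef, one_div, inv_neg]
        ring
      rw [hlhs, hrhs] at hsum1
      have heq : (((n : ℝ) - 2) * t + S) / (S * t) = ((n : ℝ) - 2) / S + 1 / t := by
        field_simp
      rw [heq] at hsum1
      exact lt_irrefl _ hsum1
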